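/- Let V ∈ R^{a×a} and W ∈ R^{b×b} be symmetric positive definite, and G ∈ R^{b×a}. Then the block matrix M = [[V, Gᵀ],[G, −W]] is invertible and ‖M⁻¹‖₂ ≤ max{‖V⁻¹‖₂, ‖W⁻¹‖₂}. -/

import Mathlib

open Matrix

/-- Spectral (operator 2-) norm of a real matrix. -/
noncomputable def specNorm {m n : Type*} [Fintype m] [Fintype n] [DecidableEq n]
    (A : Matrix m n ℝ) : ℝ :=
  ‖(Matrix.toEuclideanLin A).toContinuousLinearMap‖

namespace SaddleAux

lemma dp_eq_inner {n : Type*} [Fintype n] (p q : n → ℝ) :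
    p ⬝ᵥ q = inner ℝ ((WithLp.equiv 2 (n → ℝ)).symm p) ((WithLp.equiv 2 (n → ℝ)).symm q) := by
  simp [PiLp.inner_apply, dotProduct, RCLike.inner_apply, mul_comm]

lemma bilin_symm {n : Type*} [Fintype n] {P : Matrix n n ℝ} (hP : P.IsHermitian)
    (x y : n → ℝ) : x ⬝ᵥ P *ᵥ y = y ⬝ᵥ P *ᵥ x := by
  rw [dotProduct_mulVec, dotProduct_comm, ← mulVec_transpose,
    ← conjTranspose_eq_transpose_of_trivial, hP.eq]

lemma psd_nonneg {n : Type*} [Fintype n] {P : Matrix n n ℝ} (hP : P.PosSemidef)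
    (x : n → ℝ) : 0 ≤ x ⬝ᵥ P *ᵥ x := by simpa using hP.dotProduct_mulVec_nonneg x

lemma cs_psd {n : Type*} [Fintype n] {P : Matrix n n ℝ} (hP : P.PosSemidef)
    (x y : n → ℝ) : (x ⬝ᵥ P *ᵥ y) ^ 2 ≤ (x ⬝ᵥ P *ᵥ x) * (y ⬝ᵥ P *ᵥ y) := by
  have key : discrim (y ⬝ᵥ P *ᵥ y) (2 * (x ⬝ᵥ P *ᵥ y)) (x ⬝ᵥ P *ᵥ x) ≤ 0 := by
    apply discrim_le_zero
    intro t
    have h := psd_nonneg hP (x + t • y)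
    have hsym := bilin_symm hP.1 x y
    simp only [mulVec_add, mulVec_smul, dotProduct_add, add_dotProduct,
      dotProduct_smul, smul_dotProduct, smul_eq_mul] at h
    rw [hsym] at h
    calc (0:ℝ) ≤ x ⬝ᵥ P *ᵥ x + t * (y ⬝ᵥ P *ᵥ x) + t * (y ⬝ᵥ P *ᵥ x + t * (y ⬝ᵥ P *ᵥ y)) := h
      _ = y ⬝ᵥ P *ᵥ y * (t * t) + 2 * (x ⬝ᵥ P *ᵥ y) * t + x ⬝ᵥ P *ᵥ x := by rw [hsym]; ring
  rw [discrim] at key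
  nlinarith [key]

lemma specNorm_nonneg {m n : Type*} [Fintype m] [Fintype n] [DecidableEq n]
    (A : Matrix m n ℝ) : 0 ≤ specNorm A := norm_nonneg _

lemma norm_symm_eq {n : Type*} [Fintype n] (p : n → ℝ) :
    ‖(WithLp.equiv 2 (n → ℝ)).symm p‖ ^ 2 = p ⬝ᵥ p := by
  rw [dp_eq_inner, real_inner_self_eq_norm_sq]

lemma spec_bound {n : Type*} [Fintype n] [DecidableEq n] (A : Matrix n n ℝ) (x : n → ℝ) :
    x ⬝ᵥ A *ᵥ x ≤ specNorm A * (x ⬝ᵥ x) := by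
  set x' := (WithLp.equiv 2 (n → ℝ)).symm x with hx'
  have h1 : x ⬝ᵥ A *ᵥ x = inner ℝ x' ((Matrix.toEuclideanLin A).toContinuousLinearMap x') := by
    rw [dp_eq_inner]
    simp [hx']
  rw [h1]
  calc inner ℝ x' ((Matrix.toEuclideanLin A).toContinuousLinearMap x')
      ≤ ‖x'‖ * ‖(Matrix.toEuclideanLin A).toContinuousLinearMap x'‖ := real_inner_le_norm _ _
    _ ≤ ‖x'‖ * (specNorm A * ‖x'‖) := by
        gcongr
        exact ((Matrix.toEuclideanLin A).toContinuousLinearMap).le_opNorm x'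
    _ = specNorm A * (x ⬝ᵥ x) := by rw [← norm_symm_eq x]; ring

lemma coercive {n : Type*} [Fintype n] [DecidableEq n] {P : Matrix n n ℝ} (hP : P.PosDef)
    (u : n → ℝ) : u ⬝ᵥ u ≤ specNorm P⁻¹ * (u ⬝ᵥ P *ᵥ u) := by
  have hdet : IsUnit P.det := isUnit_iff_ne_zero.mpr (ne_of_gt hP.det_pos)
  have hQ : P⁻¹.PosSemidef := hP.inv.posSemidef
  have hQP : P⁻¹ *ᵥ (P *ᵥ u) = u := by
    rw [mulVec_mulVec, nonsing_inv_mul P hdet, one_mulVec]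
  have hcs := cs_psd hQ u (P *ᵥ u)
  rw [hQP] at hcs
  rw [dotProduct_comm (P *ᵥ u) u] at hcs
  have h3 := spec_bound P⁻¹ u
  have h4 : 0 ≤ u ⬝ᵥ P *ᵥ u := psd_nonneg hP.posSemidef u
  have h5 : 0 ≤ u ⬝ᵥ u := by rw [← norm_symm_eq u]; positivity
  rcases eq_or_lt_of_le h5 with h6 | h6
  · rw [← h6]; exact mul_nonneg (specNorm_nonneg _) h4
  · nlinarith [hcs, mul_le_mul_of_nonneg_right h3 h4, h6]

end SaddleAux

open SaddleAux in
/-- For V, W symmetric positive definite and G arbitrary,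
M = [[V, Gᵀ],[G, −W]] is invertible and ‖M⁻¹‖₂ ≤ max{‖V⁻¹‖₂, ‖W⁻¹‖₂}. -/
theorem inv_norm_stabilized_saddle (a b : ℕ)
    (V : Matrix (Fin a) (Fin a) ℝ) (W : Matrix (Fin b) (Fin b) ℝ)
    (G : Matrix (Fin b) (Fin a) ℝ)
    (hV : V.PosDef) (hW : W.PosDef) :
    IsUnit (Matrix.fromBlocks V Gᵀ G (-W)) ∧
      specNorm (Matrix.fromBlocks V Gᵀ G (-W))⁻¹ ≤
        max (specNorm V⁻¹) (specNorm W⁻¹) := by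
  set M := Matrix.fromBlocks V Gᵀ G (-W) with hM
  -- invertibility
  haveI : Invertible V := V.invertibleOfIsUnitDet (isUnit_iff_ne_zero.mpr (ne_of_gt hV.det_pos))
  have hGS : (G * V⁻¹ * Gᵀ).PosSemidef := by
    have := hV.inv.posSemidef.mul_mul_conjTranspose_same G
    rwa [conjTranspose_eq_transpose_of_trivial] at this
  have hS : (W + G * V⁻¹ * Gᵀ).PosDef := hW.add_posSemidef hGS
  have hblock : -W - G * ⅟V * Gᵀ = -(W + G * V⁻¹ * Gᵀ) := by
    rw [invOf_eq_nonsing_inv]; abel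
  have hdetM : M.det ≠ 0 := by
    rw [hM, det_fromBlocks₁₁, hblock, det_neg]
    have h1 : (W + G * V⁻¹ * Gᵀ).det > 0 := hS.det_pos
    have h2 : V.det > 0 := hV.det_pos
    have h3 : ((-1 : ℝ) ^ Fintype.card (Fin b)) ≠ 0 := by
      simp [pow_ne_zero]
    positivity
  have hMU : IsUnit M := (Matrix.isUnit_iff_isUnit_det M).mpr (isUnit_iff_ne_zero.mpr hdetM)
  refine ⟨hMU, ?_⟩
  set c := max (specNorm V⁻¹) (specNorm W⁻¹) with hc
  have hc0 : 0 ≤ c := le_trans (specNorm_nonneg V⁻¹) (le_max_left _ _)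
  apply ContinuousLinearMap.opNorm_le_bound _ hc0
  intro y
  set y₀ := WithLp.equiv 2 ((Fin a ⊕ Fin b) → ℝ) y with hy₀
  set x₀ := M⁻¹ *ᵥ y₀ with hx₀def
  have hT : (Matrix.toEuclideanLin M⁻¹).toContinuousLinearMap y =
      (WithLp.equiv 2 ((Fin a ⊕ Fin b) → ℝ)).symm x₀ := by
    simp [hx₀def, hy₀, Matrix.toEuclideanLin_apply]
  rw [hT]
  have hMx : M *ᵥ x₀ = y₀ := by
    rw [hx₀def, mulVec_mulVec, mul_nonsing_inv M (isUnit_iff_ne_zero.mpr hdetM), one_mulVec]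
  set u := fun i => x₀ (Sum.inl i) with hu
  set v := fun j => x₀ (Sum.inr j) with hv
  have hx₀ : x₀ = Sum.elim u v := by funext i; cases i <;> rfl
  set J : (Fin a ⊕ Fin b) → ℝ := Sum.elim u (-v) with hJ
  have hcross : (Gᵀ *ᵥ v) ⬝ᵥ u = (G *ᵥ u) ⬝ᵥ v := by
    rw [mulVec_transpose, ← dotProduct_mulVec, dotProduct_comm]
  have hexpand : y₀ ⬝ᵥ J = u ⬝ᵥ V *ᵥ u + v ⬝ᵥ W *ᵥ v := by
    rw [← hMx, hx₀, hM, fromBlocks_mulVec, hJ, sumElim_dotProduct_sumElim]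
    rw [dotProduct_comm u (V *ᵥ u), dotProduct_comm v (W *ᵥ v)]
    simp only [Sum.elim_comp_inl, Sum.elim_comp_inr, add_dotProduct, dotProduct_neg, neg_mulVec, neg_dotProduct]
    rw [hcross]
    ring
  have hVu : 0 ≤ u ⬝ᵥ V *ᵥ u := psd_nonneg hV.posSemidef u
  have hWv : 0 ≤ v ⬝ᵥ W *ᵥ v := psd_nonneg hW.posSemidef v
  have hkey : x₀ ⬝ᵥ x₀ ≤ c * (y₀ ⬝ᵥ J) := by
    have h1 : u ⬝ᵥ u ≤ c * (u ⬝ᵥ V *ᵥ u) := by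
      calc u ⬝ᵥ u ≤ specNorm V⁻¹ * (u ⬝ᵥ V *ᵥ u) := coercive hV u
        _ ≤ c * (u ⬝ᵥ V *ᵥ u) := by gcongr; exact le_max_left _ _
    have h2 : v ⬝ᵥ v ≤ c * (v ⬝ᵥ W *ᵥ v) := by
      calc v ⬝ᵥ v ≤ specNorm W⁻¹ * (v ⬝ᵥ W *ᵥ v) := coercive hW v
        _ ≤ c * (v ⬝ᵥ W *ᵥ v) := by gcongr; exact le_max_right _ _
    rw [hexpand, hx₀, sumElim_dotProduct_sumElim]
    linarith [h1, h2]
  -- norms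
  set x' := (WithLp.equiv 2 ((Fin a ⊕ Fin b) → ℝ)).symm x₀ with hx'
  set J' := (WithLp.equiv 2 ((Fin a ⊕ Fin b) → ℝ)).symm J with hJ'
  have hJJ : J ⬝ᵥ J = x₀ ⬝ᵥ x₀ := by
    rw [hJ, hx₀, sumElim_dotProduct_sumElim, sumElim_dotProduct_sumElim,
      neg_dotProduct, dotProduct_neg, neg_neg]
  have hnormJ : ‖J'‖ = ‖x'‖ := by
    have h1 : ‖J'‖ ^ 2 = ‖x'‖ ^ 2 := by rw [hJ', hx', norm_symm_eq, norm_symm_eq, hJJ]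
    have := congrArg Real.sqrt h1
    rwa [Real.sqrt_sq (norm_nonneg _), Real.sqrt_sq (norm_nonneg _)] at this
  have hy' : (WithLp.equiv 2 ((Fin a ⊕ Fin b) → ℝ)).symm y₀ = y := by
    rw [hy₀]; exact (WithLp.equiv 2 _).symm_apply_apply y
  have hineq : y₀ ⬝ᵥ J ≤ ‖y‖ * ‖x'‖ := by
    calc y₀ ⬝ᵥ J = inner ℝ ((WithLp.equiv 2 ((Fin a ⊕ Fin b) → ℝ)).symm y₀) J' :=
          dp_eq_inner _ _
      _ ≤ ‖(WithLp.equiv 2 ((Fin a ⊕ Fin b) → ℝ)).symm y₀‖ * ‖J'‖ := real_inner_le_norm _ _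
      _ = ‖y‖ * ‖x'‖ := by rw [hy', hnormJ]
  have hfin : ‖x'‖ ^ 2 ≤ c * (‖y‖ * ‖x'‖) := by
    rw [hx', norm_symm_eq]
    calc x₀ ⬝ᵥ x₀ ≤ c * (y₀ ⬝ᵥ J) := hkey
      _ ≤ c * (‖y‖ * ‖x'‖) := by
          rcases eq_or_lt_of_le hc0 with h | h
          · rw [← h]; simp
          · exact mul_le_mul_of_nonneg_left hineq hc0
  rcases le_or_gt ‖x'‖ 0 with h | h
  · have : ‖x'‖ = 0 := le_antisymm h (norm_nonneg _)
    rw [this]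
    positivity
  · nlinarith [hfin, h]
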